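/- arXiv:1704.07351 — 2 statements merged into one kernel-verified Lean document; each statement's English description precedes it below -/
import Mathlib

section
/- Let G be a finite connected undirected simple graph with n = |V(G)| ≥ 2 vertices and let r ∈ V(G) be a cut vertex whose removal splits G into connected components with vertex sets C_1, …, C_l (l ≥ 2). For each i let V_i := Σ_{j≠i} |C_j|. Suppose c > 0 is a real number such that V_i ≥ c·n for every i ∈ {1,…,l}. Then for every vertex v ∈ V(G), δ_{v•}(r) ≤ (1/c) · (Σ_{u∈V(G)} δ_{u•}(r)) / n; that is, the constant μ(r) satisfying δ_{v•}(r) ≤ μ(r)·\overline{δ(r)} for all v (where \overline{δ(r)} is the average of the dependency scores on r) can be taken equal to 1/c, independently of the size of G. -/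
open Finset

/-- Number of shortest paths between `s` and `t`: paths of length `dist s t`. -/
noncomputable def nsp {V : Type*} (G : SimpleGraph V) (s t : V) : ℕ :=
  Nat.card {p : G.Walk s t // p.IsPath ∧ p.length = G.dist s t}

/-- Number of shortest paths between `s` and `t` passing through `x`. -/
noncomputable def nspThrough {V : Type*} (G : SimpleGraph V) (s t x : V) : ℕ :=
  Nat.card {p : G.Walk s t // (p.IsPath ∧ p.length = G.dist s t) ∧ x ∈ p.support}

/-- Pair dependency δ_{st}(x) = σ_{st}(x)/σ_{st} (zero when x ∈ {s,t};
division by zero gives 0). -/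
noncomputable def pairDep {V : Type*} [DecidableEq V] (G : SimpleGraph V)
    (s t x : V) : ℝ :=
  if x = s ∨ x = t then 0 else (nspThrough G s t x : ℝ) / (nsp G s t : ℝ)

/-- Dependency score δ_{s•}(x) = Σ_{t ∉ {s,x}} δ_{st}(x); in particular δ_{x•}(x) = 0. -/
noncomputable def depScore {V : Type*} [Fintype V] [DecidableEq V]
    (G : SimpleGraph V) (s x : V) : ℝ :=
  ∑ t ∈ Finset.univ \ {s, x}, pairDep G s t x

/-- Betweenness centrality BC(x) = (1/(n(n-1))) Σ_{s ≠ x} δ_{s•}(x). -/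
noncomputable def bc {V : Type*} [Fintype V] [DecidableEq V]
    (G : SimpleGraph V) (x : V) : ℝ :=
  (1 / ((Fintype.card V : ℝ) * ((Fintype.card V : ℝ) - 1))) *
    ∑ s ∈ Finset.univ \ {x}, depScore G s x

/-- `C : Fin l → Finset V` is the family of vertex sets of the connected components
of `G − r`: each `C i` is nonempty, they are pairwise disjoint, they cover
`V(G) ∖ {r}`, and two vertices lie in the same `C i` iff they are joined by a walk
of `G` avoiding `r`. -/
def IsCompFamily {V : Type*} (G : SimpleGraph V) (r : V)
    {l : ℕ} (C : Fin l → Finset V) : Prop :=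
  (∀ i, (C i).Nonempty) ∧
  (∀ v : V, v ≠ r ↔ ∃ i, v ∈ C i) ∧
  (∀ i j, i ≠ j → Disjoint (C i) (C j)) ∧
  (∀ i, ∀ u ∈ C i, ∀ v : V, (v ∈ C i ↔ ∃ p : G.Walk u v, r ∉ p.support))

section auxlemmas

variable {V : Type*} [Fintype V] [DecidableEq V] (G : SimpleGraph V)

lemma finite_sp (s t : V) :
    Finite {p : G.Walk s t // p.IsPath ∧ p.length = G.dist s t} := by
  haveI : DecidableRel G.Adj := Classical.decRel _
  infer_instance

lemma nsp_pos (hconn : G.Connected) (s t : V) : 0 < nsp G s t := by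
  haveI := finite_sp G s t
  rw [nsp, Nat.card_pos_iff]
  obtain ⟨p, hp⟩ := hconn.exists_path_of_dist s t
  exact ⟨⟨⟨p, hp⟩⟩, inferInstance⟩

lemma nspThrough_le (s t x : V) : nspThrough G s t x ≤ nsp G s t := by
  haveI := finite_sp G s t
  exact Nat.card_le_card_of_injective
    (fun p => (⟨p.1, p.2.1⟩ : {p : G.Walk s t // p.IsPath ∧ p.length = G.dist s t}))
    (fun a b h => Subtype.ext (Subtype.mk_eq_mk.mp h))

lemma pairDep_nonneg (s t x : V) : 0 ≤ pairDep G s t x := by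
  rw [pairDep]
  split
  · exact le_refl 0
  · exact div_nonneg (Nat.cast_nonneg _) (Nat.cast_nonneg _)

lemma pairDep_le_one (s t x : V) : pairDep G s t x ≤ 1 := by
  rw [pairDep]
  split
  · norm_num
  · rcases Nat.eq_zero_or_pos (nsp G s t) with h | h
    · simp [h]
    · rw [div_le_one (by exact_mod_cast h)]
      exact_mod_cast nspThrough_le G s t x

lemma pairDep_eq_one (hconn : G.Connected) (s t x : V)
    (hs : x ≠ s) (ht : x ≠ t) (hall : ∀ p : G.Walk s t, x ∈ p.support) :
    pairDep G s t x = 1 := by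
  have hEq : nspThrough G s t x = nsp G s t := by
    rw [nspThrough, nsp]
    exact Nat.card_congr (Equiv.subtypeEquivRight (fun p =>
      ⟨And.left, fun h => ⟨h, hall p⟩⟩))
  have hpos := nsp_pos G hconn s t
  rw [pairDep, if_neg (by tauto), hEq, div_self (by exact_mod_cast hpos.ne')]

end auxlemmas

/-- if every V_i = Σ_{j≠i} |C_j| is at least c·n, then every
dependency score on the cut vertex r is at most (1/c) times the average. -/
theorem stmt_0 {V : Type*} [Fintype V] [DecidableEq V] (G : SimpleGraph V)
    (hconn : G.Connected) (hn : 2 ≤ Fintype.card V)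
    (r : V) {l : ℕ} (hl : 2 ≤ l) (C : Fin l → Finset V)
    (hC : IsCompFamily G r C)
    (c : ℝ) (hc : 0 < c)
    (hV : ∀ i : Fin l,
      c * (Fintype.card V : ℝ) ≤ ∑ j ∈ Finset.univ \ {i}, ((C j).card : ℝ)) :
    ∀ v : V, depScore G v r ≤
      (1 / c) * ((∑ u : V, depScore G u r) / (Fintype.card V : ℝ)) := by
  intro v
  obtain ⟨hne, hcov, hdisj, hwalk⟩ := hC
  set n := Fintype.card V with hndef
  have hn1 : (1 : ℕ) ≤ n := le_trans (by norm_num) hn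
  have hnR : (2 : ℝ) ≤ (n : ℝ) := by exact_mod_cast hn
  have hnpos : (0 : ℝ) < n := by linarith
  -- upper bound on each depScore
  have hub : depScore G v r ≤ (n : ℝ) - 1 := by
    have h1 : depScore G v r ≤ ((Finset.univ \ {v, r}).card : ℝ) := by
      rw [depScore]
      calc ∑ t ∈ Finset.univ \ {v, r}, pairDep G v t r
          ≤ ∑ _t ∈ Finset.univ \ {v, r}, (1 : ℝ) :=
            Finset.sum_le_sum (fun t _ => pairDep_le_one G v t r)
        _ = ((Finset.univ \ {v, r}).card : ℝ) := by simp
    have h2 : (Finset.univ \ {v, r}).card ≤ n - 1 := by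
      rw [Finset.card_sdiff_of_subset (Finset.subset_univ _)]
      have : 1 ≤ ({v, r} : Finset V).card := Finset.card_pos.mpr ⟨v, by simp⟩
      rw [Finset.card_univ, ← hndef]
      omega
    calc depScore G v r ≤ ((Finset.univ \ {v, r}).card : ℝ) := h1
      _ ≤ ((n - 1 : ℕ) : ℝ) := by exact_mod_cast h2
      _ = (n : ℝ) - 1 := by push_cast [hn1]; ring
  -- lower bound on each depScore for u ≠ r
  have hlb : ∀ u : V, u ≠ r → c * (n : ℝ) ≤ depScore G u r := by
    intro u hu
    obtain ⟨i, hui⟩ := (hcov u).mp hu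
    set T : Finset V := (Finset.univ \ {i}).biUnion C with hT
    have hTsub : T ⊆ Finset.univ \ {u, r} := by
      intro t ht
      rw [hT, Finset.mem_biUnion] at ht
      obtain ⟨j, hj, htj⟩ := ht
      have hji : j ≠ i := by simpa using hj
      have htr : t ≠ r := (hcov t).mpr ⟨j, htj⟩
      have htu : t ≠ u := by
        intro h; subst h
        exact (Finset.disjoint_left.mp (hdisj j i hji) htj) hui
      simp [htu, htr]
    have hone : ∀ t ∈ T, pairDep G u t r = 1 := by
      intro t ht
      have hmem := hTsub ht
      simp only [Finset.mem_sdiff, Finset.mem_insert, Finset.mem_singleton] at hmem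
      apply pairDep_eq_one G hconn u t r
      · intro h; exact hu h.symm
      · intro h
        exact hmem.2 (Or.inr h.symm)
      · intro p
        by_contra hr
        have : t ∈ C i := (hwalk i u hui t).mpr ⟨p, hr⟩
        rw [hT, Finset.mem_biUnion] at ht
        obtain ⟨j, hj, htj⟩ := ht
        have hji : j ≠ i := by simpa using hj
        exact (Finset.disjoint_left.mp (hdisj j i hji) htj) this
    have hcard : c * (n : ℝ) ≤ (T.card : ℝ) := by
      have : T.card = ∑ j ∈ Finset.univ \ {i}, (C j).card :=
        Finset.card_biUnion (fun a _ b _ hab => hdisj a b hab)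
      rw [this]
      push_cast
      exact hV i
    calc c * (n : ℝ) ≤ (T.card : ℝ) := hcard
      _ = ∑ t ∈ T, pairDep G u t r := by
          rw [Finset.sum_congr rfl hone]; simp
      _ ≤ ∑ t ∈ Finset.univ \ {u, r}, pairDep G u t r :=
          Finset.sum_le_sum_of_subset_of_nonneg hTsub
            (fun t _ _ => pairDep_nonneg G u t r)
      _ = depScore G u r := rfl
  -- depScore r r = 0 and the total sum lower bound
  have hrr : depScore G r r = 0 := by
    rw [depScore]
    apply Finset.sum_eq_zero
    intro t _
    rw [pairDep, if_pos (Or.inl rfl)]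
  have hsum : ((n : ℝ) - 1) * (c * (n : ℝ)) ≤ ∑ u : V, depScore G u r := by
    have heq : ∑ u ∈ Finset.univ \ {r}, depScore G u r = ∑ u : V, depScore G u r := by
      apply Finset.sum_subset (Finset.subset_univ _)
      intro x _ hx
      have : x = r := by simpa using hx
      rw [this, hrr]
    rw [← heq]
    have hcard : ((Finset.univ \ {r} : Finset V).card : ℝ) = (n : ℝ) - 1 := by
      rw [Finset.card_sdiff_of_subset (Finset.subset_univ _)]
      simp only [Finset.card_singleton, Finset.card_univ, ← hndef]
      push_cast [hn1]
      ring
    calc ((n : ℝ) - 1) * (c * (n : ℝ))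
        = ((Finset.univ \ {r} : Finset V).card : ℝ) * (c * (n : ℝ)) := by rw [hcard]
      _ ≤ ∑ u ∈ Finset.univ \ {r}, depScore G u r := by
          rw [← nsmul_eq_mul]
          exact Finset.card_nsmul_le_sum _ _ _
            (fun u hu => hlb u (by simpa using (Finset.mem_sdiff.mp hu).2))
  -- conclude
  have hfinal : (n : ℝ) - 1 ≤ (1 / c) * ((∑ u : V, depScore G u r) / (n : ℝ)) := by
    rw [show (1 / c) * ((∑ u : V, depScore G u r) / (n : ℝ))
          = (∑ u : V, depScore G u r) / (c * (n : ℝ)) by ring,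
        le_div_iff₀ (mul_pos hc hnpos)]
    exact hsum
  exact le_trans hub hfinal
end

section
/- Let G be a finite connected undirected simple graph and let r ∈ V(G) be a cut vertex whose removal splits G into connected components with vertex sets C_1, …, C_l (l ≥ 2). If s ∈ C_i and t ∈ C_j with i ≠ j, then the number of shortest paths between s and t factorizes as σ_{st} = σ_{sr} · σ_{rt}. -/
open Finset

section Aux

open SimpleGraph Walk

variable {V : Type*} [DecidableEq V] {G : SimpleGraph V}

private lemma takeUntil_start' {u t : V} (w : G.Walk u t) (h : u ∈ w.support) :
    w.takeUntil u h = Walk.nil := by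
  cases w with
  | nil => rfl
  | cons a p => simp [Walk.takeUntil]

private lemma takeUntil_append_eq' {t : V} : ∀ {s u : V} (q1 : G.Walk s u) (q2 : G.Walk u t)
    (_ : q1.IsPath) (_ : s ≠ u) (h : u ∈ (q1.append q2).support),
    (q1.append q2).takeUntil u h = q1 := by
  intro s u q1
  induction q1 with
  | nil => intro q2 hq1 hs h; exact absurd rfl hs
  | @cons a v w ha p ih =>
    intro q2 hq1 hs h
    show (Walk.cons ha (p.append q2)).takeUntil w h = Walk.cons ha p
    erw [Walk.takeUntil.eq_2]
    rw [dif_neg hs]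
    congr 1
    by_cases hv : v = w
    · subst hv
      have hnil : p = Walk.nil :=
        (Walk.isPath_iff_eq_nil (p := p)).mp ((Walk.cons_isPath_iff _ _).mp hq1).1
      subst hnil
      exact takeUntil_start' q2 _
    · exact ih q2 ((Walk.cons_isPath_iff _ _).mp hq1).1 hv _

private lemma append_left_cancel' {a b c : V} : ∀ (p : G.Walk a b) (q q' : G.Walk b c),
    p.append q = p.append q' → q = q' := by
  intro p
  induction p with
  | nil => intro q q' h; simpa using h
  | cons ha p ih =>
    intro q q' h
    rw [Walk.cons_append, Walk.cons_append] at h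
    exact ih q q' (by simpa using h)

end Aux

/-- for s, t in distinct components of G − r, the number of
shortest paths factorizes: σ_{st} = σ_{sr} · σ_{rt}. -/
theorem stmt_5 {V : Type*} [Fintype V] [DecidableEq V] (G : SimpleGraph V)
    (hconn : G.Connected)
    (r : V) {l : ℕ} (hl : 2 ≤ l) (C : Fin l → Finset V)
    (hC : IsCompFamily G r C)
    (i j : Fin l) (hij : i ≠ j) (s t : V) (hs : s ∈ C i) (ht : t ∈ C j) :
    nsp G s t = nsp G s r * nsp G r t := by
  obtain ⟨hne, hmem, hdisj, hcomp⟩ := hC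
  have hsr : s ≠ r := (hmem s).mpr ⟨i, hs⟩
  have htr : t ≠ r := (hmem t).mpr ⟨j, ht⟩
  -- every walk from s to t passes through r
  have hthrough : ∀ p : G.Walk s t, r ∈ p.support := by
    intro p
    by_contra hr
    have : t ∈ C i := ((hcomp i s hs t)).mpr ⟨p, hr⟩
    exact (Finset.disjoint_left.mp (hdisj i j hij) this) ht
  -- distance additivity
  have hdist : G.dist s t = G.dist s r + G.dist r t := by
    have h1 : G.dist s t ≤ G.dist s r + G.dist r t := hconn.dist_triangle
    obtain ⟨p, hp⟩ := hconn.exists_walk_length_eq_dist s t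
    have hrp : r ∈ p.support := hthrough p
    have hsplit : (p.takeUntil r hrp).length + (p.dropUntil r hrp).length = p.length := by
      rw [← SimpleGraph.Walk.length_append, SimpleGraph.Walk.take_spec]
    have h2 : G.dist s r ≤ (p.takeUntil r hrp).length := SimpleGraph.dist_le _
    have h3 : G.dist r t ≤ (p.dropUntil r hrp).length := SimpleGraph.dist_le _
    omega
  -- key fact: endpoint lengths of the split are exactly the distances
  have hlen : ∀ (p : G.Walk s t), p.length = G.dist s t → ∀ (hrp : r ∈ p.support),
      (p.takeUntil r hrp).length = G.dist s r ∧ (p.dropUntil r hrp).length = G.dist r t := by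
    intro p hp hrp
    have hsplit : (p.takeUntil r hrp).length + (p.dropUntil r hrp).length = p.length := by
      rw [← SimpleGraph.Walk.length_append, SimpleGraph.Walk.take_spec]
    have h2 : G.dist s r ≤ (p.takeUntil r hrp).length := SimpleGraph.dist_le _
    have h3 : G.dist r t ≤ (p.dropUntil r hrp).length := SimpleGraph.dist_le _
    omega
  -- the equivalence
  let e : {p : G.Walk s t // p.IsPath ∧ p.length = G.dist s t} ≃
      ({p : G.Walk s r // p.IsPath ∧ p.length = G.dist s r} ×
       {p : G.Walk r t // p.IsPath ∧ p.length = G.dist r t}) :=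
    { toFun := fun p =>
        (⟨p.1.takeUntil r (hthrough p.1), p.2.1.takeUntil _,
          (hlen p.1 p.2.2 (hthrough p.1)).1⟩,
         ⟨p.1.dropUntil r (hthrough p.1), p.2.1.dropUntil _,
          (hlen p.1 p.2.2 (hthrough p.1)).2⟩)
      invFun := fun q =>
        ⟨q.1.1.append q.2.1, by
          have hl : (q.1.1.append q.2.1).length = G.dist s t := by
            rw [SimpleGraph.Walk.length_append, q.1.2.2, q.2.2.2, hdist]
          exact ⟨SimpleGraph.Walk.isPath_of_length_eq_dist _ hl, hl⟩⟩
      left_inv := fun p => Subtype.ext (SimpleGraph.Walk.take_spec p.1 (hthrough p.1))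
      right_inv := fun q => by
        obtain ⟨⟨q1, hq1, hq1l⟩, ⟨q2, hq2, hq2l⟩⟩ := q
        have hmemr := hthrough (q1.append q2)
        have htake : (q1.append q2).takeUntil r hmemr = q1 :=
          takeUntil_append_eq' q1 q2 hq1 hsr hmemr
        have hdrop : (q1.append q2).dropUntil r hmemr = q2 := by
          apply append_left_cancel' q1
          conv_rhs => rw [← SimpleGraph.Walk.take_spec (q1.append q2) hmemr]
          rw [htake]
        exact Prod.ext (Subtype.ext htake) (Subtype.ext hdrop) }
  rw [nsp, nsp, nsp, Nat.card_congr e, Nat.card_prod]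
end
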